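/- Let ā > 0 and let ρ : ℝ → ℝ be twice continuously differentiable, 2π-periodic, with ρ(θ) > 0 and ρ(θ)² + 2ρ'(θ)² − ρ(θ)ρ''(θ) > 0 for all θ. Let Φ : ℝ² → ℝ satisfy Φ(r cos θ, r sin θ) = ā r² / ρ(θ)² for all r > 0 and θ ∈ ℝ. Then Φ is twice continuously differentiable on ℝ² \ {0} and there exists δ₁ > 0 such that for every x ∈ ℝ² with x ≠ 0 and every X ∈ ℝ², the second derivative of Φ at x satisfies D²Φ(x)(X, X) ≥ δ₁ ‖X‖². -/

import Mathlib

open Real Filter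


/-- second derivative along a line -/
lemma second_deriv_line {E : Type*} [NormedAddCommGroup E] [NormedSpace ℝ E]
    (Φ : E → ℝ) (x X : E)
    (hd : ∀ᶠ z in nhds x, DifferentiableAt ℝ Φ z)
    (hd2 : DifferentiableAt ℝ (fderiv ℝ Φ) x) :
    fderiv ℝ (fderiv ℝ Φ) x X X
      = deriv (deriv (fun s : ℝ => Φ (x + s • X))) 0 := by
  have hline : ∀ t : ℝ, HasDerivAt (fun s : ℝ => x + s • X) X t := by
    intro t
    simpa using ((hasDerivAt_id t).smul_const X).const_add x
  have hev : ∀ᶠ t in nhds (0:ℝ), DifferentiableAt ℝ Φ (x + t • X) := by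
    have hc : Continuous (fun t : ℝ => x + t • X) := by continuity
    have : Tendsto (fun t : ℝ => x + t • X) (nhds 0) (nhds x) := by
      have := hc.tendsto 0; simpa using this
    exact this.eventually hd
  have h1 : (deriv (fun s : ℝ => Φ (x + s • X)))
      =ᶠ[nhds 0] (fun t => fderiv ℝ Φ (x + t • X) X) := by
    filter_upwards [hev] with t ht
    exact (ht.hasFDerivAt.comp_hasDerivAt t (hline t)).deriv
  have h2 : HasDerivAt (fun t : ℝ => fderiv ℝ Φ (x + t • X) X)
      (fderiv ℝ (fderiv ℝ Φ) x X X) 0 := by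
    have hm : HasDerivAt (fun t : ℝ => fderiv ℝ Φ (x + t • X))
        (fderiv ℝ (fderiv ℝ Φ) x X) 0 := by
      have hd2' : HasFDerivAt (fderiv ℝ Φ) (fderiv ℝ (fderiv ℝ Φ) x) (x + (0:ℝ) • X) := by
        simpa using hd2.hasFDerivAt
      exact hd2'.comp_hasDerivAt 0 (hline 0)
    have := (ContinuousLinearMap.apply ℝ ℝ X).hasFDerivAt.comp_hasDerivAt 0 hm
    exact this
  rw [h1.deriv_eq]
  exact h2.deriv.symm

/-- 2x2 quadratic form lower eigenvalue bound -/
lemma quad_lower (A B C a b : ℝ) :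
    ((A + C) - Real.sqrt ((A - C)^2 + 4*B^2))/2 * (a^2 + b^2)
      ≤ A*a^2 + 2*B*a*b + C*b^2 := by
  set d := Real.sqrt ((A - C)^2 + 4*B^2) with hd
  have hd0 : 0 ≤ d := Real.sqrt_nonneg _
  have hdsq : d^2 = (A - C)^2 + 4*B^2 := Real.sq_sqrt (by positivity)
  have hdge : |A - C| ≤ d := by
    rw [hd]
    have : |A - C| = Real.sqrt ((A-C)^2) := (Real.sqrt_sq_eq_abs _).symm
    rw [this]
    exact Real.sqrt_le_sqrt (by nlinarith)
  set lam := ((A + C) - d)/2 with hlam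
  have hP : 0 ≤ A - lam := by
    have := abs_le.mp hdge
    rw [hlam]; cases' abs_le.mp hdge with h1 h2; linarith
  have hQ : 0 ≤ C - lam := by
    rw [hlam]; cases' abs_le.mp hdge with h1 h2; linarith
  have hPQ : (A - lam) * (C - lam) = B^2 := by
    rw [hlam]; nlinarith [hdsq]
  -- want : lam*(a²+b²) ≤ A a² + 2B ab + C b²  i.e. P a² + 2B ab + Q b² ≥ 0
  rcases eq_or_lt_of_le hP with h0 | h0
  · have hB : B = 0 := by nlinarith [hPQ]
    have hAl : A = lam := by linarith
    have e1 : A*a^2 = lam*a^2 := by rw [hAl]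
    have e3 : 2*B*a*b = 0 := by rw [hB]; ring
    nlinarith [e1, e3, mul_nonneg hQ (sq_nonneg b)]
  · nlinarith [sq_nonneg ((A - lam)*a + B*b), mul_nonneg h0.le hQ, sq_nonneg b]

/-- positivity of the lower eigenvalue -/
lemma quad_lam_pos {A B C : ℝ} (hA : 0 < A) (hdet : 0 < A*C - B^2) :
    0 < ((A + C) - Real.sqrt ((A - C)^2 + 4*B^2))/2 := by
  have hC : 0 < C := by nlinarith [sq_nonneg B]
  have hdsq : Real.sqrt ((A - C)^2 + 4*B^2) ^ 2 = (A - C)^2 + 4*B^2 :=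
    Real.sq_sqrt (by positivity)
  have hlt : Real.sqrt ((A - C)^2 + 4*B^2) < A + C := by
    nlinarith [Real.sqrt_nonneg ((A - C)^2 + 4*B^2)]
  linarith

section U
variable (abar : ℝ) (ρ : ℝ → ℝ)

lemma contDiff_u (hρ : ContDiff ℝ 2 ρ) (hpos : ∀ θ, 0 < ρ θ) :
    ContDiff ℝ 2 (fun θ => abar / ρ θ ^ 2) :=
  contDiff_const.div (hρ.pow 2) (fun θ => pow_ne_zero 2 (hpos θ).ne')

lemma hasDerivAt_u (hρ : ContDiff ℝ 2 ρ) (hpos : ∀ θ, 0 < ρ θ) (θ : ℝ) :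
    HasDerivAt (fun θ => abar / ρ θ ^ 2) (-2*abar*deriv ρ θ / ρ θ^3) θ := by
  have hρd : DifferentiableAt ℝ ρ θ := (hρ.differentiable (by norm_num)) θ
  have h1 : HasDerivAt (fun θ => ρ θ ^ 2) (2 * ρ θ ^ 1 * deriv ρ θ) θ := by
    simpa using hρd.hasDerivAt.fun_pow 2
  have h2 := (hasDerivAt_const θ abar).fun_div h1 (by have := hpos θ; positivity)
  refine h2.congr_deriv ?_
  have := (hpos θ).ne'
  field_simp
  ring

lemma deriv_u (hρ : ContDiff ℝ 2 ρ) (hpos : ∀ θ, 0 < ρ θ) :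
    deriv (fun θ => abar / ρ θ ^ 2) = fun θ => -2*abar*deriv ρ θ / ρ θ^3 :=
  funext fun θ => (hasDerivAt_u abar ρ hρ hpos θ).deriv

lemma contDiff_derivρ (hρ : ContDiff ℝ 2 ρ) : ContDiff ℝ 1 (deriv ρ) := by
  have : ContDiff ℝ (1+1) ρ := by exact_mod_cast hρ
  exact (contDiff_succ_iff_deriv.mp this).2.2

lemma hasDerivAt_u' (hρ : ContDiff ℝ 2 ρ) (hpos : ∀ θ, 0 < ρ θ) (θ : ℝ) :
    HasDerivAt (deriv (fun θ => abar / ρ θ ^ 2))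
      (-2*abar*(deriv (deriv ρ) θ * ρ θ - 3*(deriv ρ θ)^2) / ρ θ^4) θ := by
  rw [deriv_u abar ρ hρ hpos]
  have hρd : DifferentiableAt ℝ ρ θ := (hρ.differentiable (by norm_num)) θ
  have hρ'd : DifferentiableAt ℝ (deriv ρ) θ :=
    ((contDiff_derivρ ρ hρ).differentiable (by norm_num)) θ
  have h1 : HasDerivAt (fun θ => -2*abar*deriv ρ θ) (-2*abar*deriv (deriv ρ) θ) θ :=
    (hρ'd.hasDerivAt.const_mul _)
  have h2 : HasDerivAt (fun θ => ρ θ ^ 3) (3 * ρ θ ^ 2 * deriv ρ θ) θ := by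
    simpa using hρd.hasDerivAt.fun_pow 3
  have h3 := h1.fun_div h2 (by have := hpos θ; positivity)
  refine h3.congr_deriv ?_
  have := (hpos θ).ne'
  field_simp
  ring

lemma deriv_u' (hρ : ContDiff ℝ 2 ρ) (hpos : ∀ θ, 0 < ρ θ) :
    deriv (deriv (fun θ => abar / ρ θ ^ 2))
      = fun θ => -2*abar*(deriv (deriv ρ) θ * ρ θ - 3*(deriv ρ θ)^2) / ρ θ^4 :=
  funext fun θ => (hasDerivAt_u' abar ρ hρ hpos θ).deriv

end U

section Lam
variable (abar : ℝ) (ρ : ℝ → ℝ)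

noncomputable def Afun (θ : ℝ) : ℝ := 2 * (abar / ρ θ ^ 2)
noncomputable def Bfun (θ : ℝ) : ℝ := deriv (fun θ => abar / ρ θ ^ 2) θ
noncomputable def Cfun (θ : ℝ) : ℝ :=
  deriv (deriv (fun θ => abar / ρ θ ^ 2)) θ + 2 * (abar / ρ θ ^ 2)
noncomputable def lamf (θ : ℝ) : ℝ :=
  ((Afun abar ρ θ + Cfun abar ρ θ)
    - Real.sqrt ((Afun abar ρ θ - Cfun abar ρ θ)^2 + 4*(Bfun abar ρ θ)^2))/2

lemma contDiff_u' (hρ : ContDiff ℝ 2 ρ) (hpos : ∀ θ, 0 < ρ θ) :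
    ContDiff ℝ 2 (fun θ => abar / ρ θ ^ 2) :=
  contDiff_const.div (hρ.pow 2) (fun θ => pow_ne_zero 2 (hpos θ).ne')

lemma lamf_continuous (hρ : ContDiff ℝ 2 ρ) (hpos : ∀ θ, 0 < ρ θ) :
    Continuous (lamf abar ρ) := by
  have hu := contDiff_u' abar ρ hρ hpos
  have hu2 : ContDiff ℝ (1+1) (fun θ => abar / ρ θ ^ 2) := by exact_mod_cast hu
  have hu' : ContDiff ℝ 1 (deriv (fun θ => abar / ρ θ ^ 2)) :=
    (contDiff_succ_iff_deriv.mp hu2).2.2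
  have hA : Continuous (Afun abar ρ) := by
    unfold Afun; exact (continuous_const.mul hu.continuous)
  have hB : Continuous (Bfun abar ρ) := by
    unfold Bfun; exact hu.continuous_deriv (by norm_num)
  have hC : Continuous (Cfun abar ρ) := by
    unfold Cfun
    exact (hu'.continuous_deriv le_rfl).add (continuous_const.mul hu.continuous)
  unfold lamf
  fun_prop
end Lam

section Lam2
variable (abar : ℝ) (ρ : ℝ → ℝ)

lemma lamf_pos (habar : 0 < abar) (hρ : ContDiff ℝ 2 ρ) (hpos : ∀ θ, 0 < ρ θ)
    (hconv : ∀ θ : ℝ, 0 < ρ θ ^ 2 + 2 * deriv ρ θ ^ 2 - ρ θ * deriv (deriv ρ) θ)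
    (θ : ℝ) : 0 < lamf abar ρ θ := by
  have hR := hpos θ
  have hRne := hR.ne'
  have hA : 0 < Afun abar ρ θ := by unfold Afun; positivity
  have hdet : 0 < Afun abar ρ θ * Cfun abar ρ θ - Bfun abar ρ θ ^ 2 := by
    have key : Afun abar ρ θ * Cfun abar ρ θ - Bfun abar ρ θ ^ 2
        = 4*abar^2*(ρ θ^2 + 2*deriv ρ θ^2 - ρ θ*deriv (deriv ρ) θ)/ρ θ^6 := by
      unfold Afun Bfun Cfun
      rw [deriv_u' abar ρ hρ hpos]
      simp only [deriv_u abar ρ hρ hpos]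
      field_simp
      ring
    rw [key]
    have := hconv θ
    positivity
  exact quad_lam_pos hA hdet

lemma periodic_deriv' (f : ℝ → ℝ) (c : ℝ) (hf : Function.Periodic f c) :
    Function.Periodic (deriv f) c := by
  intro θ
  have h1 : deriv (fun t => f (t + c)) θ = deriv f (θ + c) := by
    rw [deriv_comp_add_const]
  rw [← h1]
  congr 1
  funext t
  exact hf t

lemma lamf_min (habar : 0 < abar) (hρ : ContDiff ℝ 2 ρ) (hpos : ∀ θ, 0 < ρ θ)
    (hper : Function.Periodic ρ (2 * Real.pi))
    (hconv : ∀ θ : ℝ, 0 < ρ θ ^ 2 + 2 * deriv ρ θ ^ 2 - ρ θ * deriv (deriv ρ) θ) :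
    ∃ δ : ℝ, 0 < δ ∧ ∀ θ : ℝ, δ ≤ lamf abar ρ θ := by
  have hcont := lamf_continuous abar ρ hρ hpos
  obtain ⟨θm, hθm, hmin⟩ := (isCompact_Icc (a := (0:ℝ)) (b := 2*Real.pi)).exists_isMinOn
    ⟨0, by constructor <;> [rfl; positivity]⟩ hcont.continuousOn
  refine ⟨lamf abar ρ θm, lamf_pos abar ρ habar hρ hpos hconv θm, fun θ => ?_⟩
  have hu_per : Function.Periodic (fun θ => abar / ρ θ ^ 2) (2*Real.pi) := by
    intro t; simp only [hper t]
  have hper_lam : Function.Periodic (lamf abar ρ) (2*Real.pi) := by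
    intro t
    have h1 : abar / ρ (t + 2*Real.pi) ^ 2 = abar / ρ t ^ 2 := by rw [hper t]
    unfold lamf Afun Bfun Cfun
    rw [h1, periodic_deriv' _ _ hu_per t,
      periodic_deriv' _ _ (periodic_deriv' _ _ hu_per) t]
  obtain ⟨y, hy, hval⟩ := hper_lam.exists_mem_Ico₀ (by positivity) θ
  rw [hval]
  exact hmin ⟨hy.1, hy.2.le⟩
end Lam2

local notation "E2" => EuclideanSpace ℝ (Fin 2)

noncomputable def Gfun (abar : ℝ) (ρ : ℝ → ℝ) (θ₀ c s : ℝ) (z : E2) : ℝ :=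
  abar * ((z 0)^2 + (z 1)^2)
    / ρ (θ₀ + Real.arctan ((-s * z 0 + c * z 1) / (c * z 0 + s * z 1)))^2

lemma normsq_eq (z : E2) : z 0 ^ 2 + z 1 ^ 2 = ‖z‖ ^ 2 := by
  rw [EuclideanSpace.norm_eq, Real.sq_sqrt (by positivity)]
  simp [Fin.sum_univ_two, sq_abs]

lemma exists_theta (x : E2) (hx : x ≠ 0) :
    0 < ‖x‖ ∧ ∃ θ₀ : ℝ, x 0 = ‖x‖ * Real.cos θ₀ ∧ x 1 = ‖x‖ * Real.sin θ₀ := by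
  have hr : 0 < ‖x‖ := norm_pos_iff.mpr hx
  refine ⟨hr, ?_⟩
  set z : ℂ := ⟨x 0, x 1⟩ with hzdef
  have hzne : z ≠ 0 := by
    intro h
    apply hx
    have h0 : x 0 = 0 := congrArg Complex.re h
    have h1 : x 1 = 0 := congrArg Complex.im h
    ext i
    fin_cases i <;> simp [h0, h1]
  have habs : ‖z‖ = ‖x‖ := by
    rw [Complex.norm_def, Complex.normSq_mk, EuclideanSpace.norm_eq]
    simp [Fin.sum_univ_two, sq_abs]
    ring_nf
  refine ⟨Complex.arg z, ?_, ?_⟩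
  · rw [Complex.cos_arg hzne, habs]
    field_simp [hzdef]
    rfl
  · rw [Complex.sin_arg, habs]
    field_simp [hzdef]
    rfl

lemma Phi_eq_G (abar : ℝ) (ρ : ℝ → ℝ) (hpos : ∀ θ, 0 < ρ θ)
    (Φ : E2 → ℝ)
    (hΦ : ∀ r : ℝ, 0 < r → ∀ θ : ℝ,
      Φ ((WithLp.equiv 2 (Fin 2 → ℝ)).symm ![r * Real.cos θ, r * Real.sin θ])
        = abar * r ^ 2 / ρ θ ^ 2)
    (θ₀ : ℝ) (z : E2)
    (hz : 0 < Real.cos θ₀ * z 0 + Real.sin θ₀ * z 1) :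
    Φ z = Gfun abar ρ θ₀ (Real.cos θ₀) (Real.sin θ₀) z := by
  set c := Real.cos θ₀ with hc
  set s := Real.sin θ₀ with hs
  have hcs : c^2 + s^2 = 1 := by rw [hc, hs]; exact Real.cos_sq_add_sin_sq θ₀
  set pz := c * z 0 + s * z 1 with hpz
  set qz := -s * z 0 + c * z 1 with hqz
  have hpq : pz^2 + qz^2 = z 0^2 + z 1^2 := by
    rw [hpz, hqz]; linear_combination (z 0^2 + z 1^2) * hcs
  set sz := Real.sqrt (pz^2 + qz^2) with hsz
  have hsz2 : sz^2 = pz^2 + qz^2 := Real.sq_sqrt (by positivity)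
  have hszpos : 0 < sz := by
    rw [hsz]; apply Real.sqrt_pos.mpr; positivity
  have hsqrt : Real.sqrt (1 + (qz/pz)^2) = sz / pz := by
    have h : 1 + (qz/pz)^2 = (pz^2 + qz^2)/pz^2 := by field_simp
    rw [h, Real.sqrt_div (by positivity), Real.sqrt_sq hz.le]
  set φ := θ₀ + Real.arctan (qz/pz) with hφ
  have hcosφ : sz * Real.cos φ = z 0 := by
    rw [hφ, Real.cos_add, Real.cos_arctan, Real.sin_arctan, hsqrt]
    rw [← hc, ← hs]
    field_simp
    linear_combination (z 0) * hcs
  have hsinφ : sz * Real.sin φ = z 1 := by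
    rw [hφ, Real.sin_add, Real.cos_arctan, Real.sin_arctan, hsqrt]
    rw [← hc, ← hs]
    field_simp
    linear_combination (z 1) * hcs
  have hzz : ((WithLp.equiv 2 (Fin 2 → ℝ)).symm ![sz * Real.cos φ, sz * Real.sin φ]) = z := by
    ext i
    fin_cases i <;> simp [hcosφ, hsinφ]
  have := hΦ sz hszpos φ
  rw [hzz] at this
  rw [this, Gfun]
  rw [hsz2, hpq]

lemma G_contDiffAt (abar : ℝ) (ρ : ℝ → ℝ) (hρ : ContDiff ℝ 2 ρ) (hpos : ∀ θ, 0 < ρ θ)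
    (θ₀ c s : ℝ) (z : E2) (hz : 0 < c * z 0 + s * z 1) :
    ContDiffAt ℝ 2 (Gfun abar ρ θ₀ c s) z := by
  have h0 : ContDiff ℝ 2 (fun w : E2 => w 0) := by fun_prop
  have h1 : ContDiff ℝ 2 (fun w : E2 => w 1) := by fun_prop
  have hp : ContDiff ℝ 2 (fun w : E2 => c * w 0 + s * w 1) :=
    (contDiff_const.mul h0).add (contDiff_const.mul h1)
  have hq : ContDiff ℝ 2 (fun w : E2 => -s * w 0 + c * w 1) :=
    (contDiff_const.mul h0).add (contDiff_const.mul h1)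
  have hdiv : ContDiffAt ℝ 2 (fun w : E2 => (-s * w 0 + c * w 1) / (c * w 0 + s * w 1)) z :=
    hq.contDiffAt.div hp.contDiffAt hz.ne'
  have harc : ContDiffAt ℝ 2
      (fun w : E2 => θ₀ + Real.arctan ((-s * w 0 + c * w 1) / (c * w 0 + s * w 1))) z :=
    contDiffAt_const.add ((Real.contDiff_arctan.contDiffAt).comp z hdiv)
  have hρc : ContDiffAt ℝ 2
      (fun w : E2 => ρ (θ₀ + Real.arctan ((-s * w 0 + c * w 1) / (c * w 0 + s * w 1))) ^ 2) z :=
    (hρ.contDiffAt.comp z harc).pow 2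
  have hnum : ContDiffAt ℝ 2 (fun w : E2 => abar * ((w 0)^2 + (w 1)^2)) z :=
    (contDiff_const.mul ((h0.pow 2).add (h1.pow 2))).contDiffAt
  exact hnum.div hρc (pow_ne_zero 2 (hpos _).ne')

lemma Phi_eventually_G (abar : ℝ) (ρ : ℝ → ℝ) (hpos : ∀ θ, 0 < ρ θ)
    (Φ : E2 → ℝ)
    (hΦ : ∀ r : ℝ, 0 < r → ∀ θ : ℝ,
      Φ ((WithLp.equiv 2 (Fin 2 → ℝ)).symm ![r * Real.cos θ, r * Real.sin θ])
        = abar * r ^ 2 / ρ θ ^ 2)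
    (θ₀ : ℝ) (x : E2) (hx : 0 < Real.cos θ₀ * x 0 + Real.sin θ₀ * x 1) :
    Φ =ᶠ[nhds x] Gfun abar ρ θ₀ (Real.cos θ₀) (Real.sin θ₀) := by
  have hcont : Continuous (fun w : E2 => Real.cos θ₀ * w 0 + Real.sin θ₀ * w 1) := by
    have h0 : Continuous (fun w : E2 => w 0) := (EuclideanSpace.proj (0 : Fin 2)).continuous
    have h1 : Continuous (fun w : E2 => w 1) := (EuclideanSpace.proj (1 : Fin 2)).continuous
    fun_prop
  have hU : IsOpen {w : E2 | 0 < Real.cos θ₀ * w 0 + Real.sin θ₀ * w 1} :=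
    isOpen_lt continuous_const hcont
  filter_upwards [hU.mem_nhds hx] with w hw
  exact Phi_eq_G abar ρ hpos Φ hΦ θ₀ w hw

lemma Phi_contDiffAt (abar : ℝ) (ρ : ℝ → ℝ) (hρ : ContDiff ℝ 2 ρ) (hpos : ∀ θ, 0 < ρ θ)
    (Φ : E2 → ℝ)
    (hΦ : ∀ r : ℝ, 0 < r → ∀ θ : ℝ,
      Φ ((WithLp.equiv 2 (Fin 2 → ℝ)).symm ![r * Real.cos θ, r * Real.sin θ])
        = abar * r ^ 2 / ρ θ ^ 2)
    (x : E2) (hx : x ≠ 0) : ContDiffAt ℝ 2 Φ x := by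
  obtain ⟨hr, θ₀, h0, h1⟩ := exists_theta x hx
  have hpx : 0 < Real.cos θ₀ * x 0 + Real.sin θ₀ * x 1 := by
    rw [h0, h1]
    have := Real.cos_sq_add_sin_sq θ₀
    nlinarith
  exact (G_contDiffAt abar ρ hρ hpos θ₀ _ _ x hpx).congr_of_eventuallyEq
    (Phi_eventually_G abar ρ hpos Φ hΦ θ₀ x hpx)

set_option maxHeartbeats 2000000 in
lemma hessian_rep (abar : ℝ) (ρ : ℝ → ℝ) (hρ : ContDiff ℝ 2 ρ) (hpos : ∀ θ, 0 < ρ θ)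
    (Φ : EuclideanSpace ℝ (Fin 2) → ℝ)
    (hΦ : ∀ r : ℝ, 0 < r → ∀ θ : ℝ,
      Φ ((WithLp.equiv 2 (Fin 2 → ℝ)).symm ![r * Real.cos θ, r * Real.sin θ])
        = abar * r ^ 2 / ρ θ ^ 2)
    (x : EuclideanSpace ℝ (Fin 2)) (hx : x ≠ 0) (X : EuclideanSpace ℝ (Fin 2)) :
    ∃ θ₀ a b : ℝ, a^2 + b^2 = ‖X‖^2 ∧
      fderiv ℝ (fderiv ℝ Φ) x X X
        = Afun abar ρ θ₀ * a^2 + 2 * Bfun abar ρ θ₀ * a * b + Cfun abar ρ θ₀ * b^2 := by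
  obtain ⟨hr, θ₀, h0, h1⟩ := exists_theta x hx
  set r := ‖x‖ with hrdef
  set c := Real.cos θ₀ with hc
  set s := Real.sin θ₀ with hs
  have hcs : c^2 + s^2 = 1 := by rw [hc, hs]; exact Real.cos_sq_add_sin_sq θ₀
  set a := c * X 0 + s * X 1 with ha
  set b := -s * X 0 + c * X 1 with hb
  have hab : a^2 + b^2 = ‖X‖^2 := by
    rw [← normsq_eq X, ha, hb]; linear_combination (X 0^2 + X 1^2) * hcs
  refine ⟨θ₀, a, b, hab, ?_⟩
  -- differentiability facts
  have hΦdiff : ∀ᶠ z in nhds x, DifferentiableAt ℝ Φ z := by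
    filter_upwards [isOpen_ne.mem_nhds hx] with z hz
    exact (Phi_contDiffAt abar ρ hρ hpos Φ hΦ z hz).differentiableAt (by norm_num)
  have hfd2 : DifferentiableAt ℝ (fderiv ℝ Φ) x :=
    ((Phi_contDiffAt abar ρ hρ hpos Φ hΦ x hx).fderiv_right
      (m := 1) (by norm_num)).differentiableAt (by norm_num)
  rw [second_deriv_line Φ x X hΦdiff hfd2]
  -- coordinates along the line
  have hpline : ∀ t : ℝ, c * (x + t • X) 0 + s * (x + t • X) 1 = r + t * a := by
    intro t
    simp only [PiLp.add_apply, PiLp.smul_apply, smul_eq_mul]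
    rw [h0, h1, ha]
    linear_combination r * hcs
  have hqline : ∀ t : ℝ, -s * (x + t • X) 0 + c * (x + t • X) 1 = t * b := by
    intro t
    simp only [PiLp.add_apply, PiLp.smul_apply, smul_eq_mul]
    rw [h0, h1, hb]; ring
  -- epsilon ball
  set ε := r / (|a| + 1) with hε
  have hεpos : 0 < ε := by rw [hε]; positivity
  have hεball : ∀ t : ℝ, |t| < ε → 0 < r + t * a := by
    intro t ht
    have h2 : -(t*a) ≤ |t*a| := neg_le_abs _
    have h3 : |t*a| = |t| * |a| := abs_mul t a
    have h4 : |t| * |a| ≤ |t| * (|a|+1) := by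
      apply mul_le_mul_of_nonneg_left (by linarith) (abs_nonneg t)
    have h5 : |t| * (|a|+1) < ε*(|a|+1) := by
      apply mul_lt_mul_of_pos_right ht (by positivity)
    have h6 : ε*(|a|+1) = r := by rw [hε]; field_simp
    nlinarith [abs_nonneg t]
  set η := fun t : ℝ => θ₀ + Real.arctan (t*b/(r+t*a)) with hηdef
  set P := fun t : ℝ => (r+t*a)^2 + (t*b)^2 with hPdef
  -- pointwise identification of Φ along the line
  have rot_sq : ∀ A B : ℝ, (c*A+s*B)^2 + (-s*A+c*B)^2 = A^2+B^2 := by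
    intro A B; linear_combination (A^2+B^2) * hcs
  have hkG : ∀ t : ℝ, |t| < ε → Φ (x + t • X) = P t * (abar / ρ (η t)^2) := by
    intro t ht
    have hpt := hεball t ht
    have hin : 0 < c * (x + t • X) 0 + s * (x + t • X) 1 := by rw [hpline t]; exact hpt
    rw [Phi_eq_G abar ρ hpos Φ hΦ θ₀ _ hin]
    unfold Gfun
    rw [← hc, ← hs, hpline t, hqline t]
    have hnum : ((x + t • X) 0)^2 + ((x + t • X) 1)^2 = P t := by
      simp only [hPdef]
      rw [← hpline t, ← hqline t, rot_sq]
    rw [hnum, hηdef]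
    ring
  -- derivative of η
  have hPpos : ∀ t : ℝ, 0 < r + t*a → 0 < P t := by
    intro t hpt
    simp only [hPdef]
    have := sq_nonneg (t*b)
    nlinarith
  have hηd : ∀ t : ℝ, 0 < r + t*a → HasDerivAt η (b*r / P t) t := by
    intro t hpt
    have hPt := hPpos t hpt
    have h3 : HasDerivAt (fun t : ℝ => t*b) b t := by simpa using (hasDerivAt_id t).mul_const b
    have h2 : HasDerivAt (fun t : ℝ => r + t*a) a t := by
      simpa using ((hasDerivAt_id t).mul_const a).const_add r
    have hw : HasDerivAt (fun t : ℝ => t*b/(r+t*a)) ((b*(r+t*a) - (t*b)*a)/(r+t*a)^2) t :=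
      h3.div h2 hpt.ne'
    have harc := (Real.hasDerivAt_arctan (t*b/(r+t*a))).comp t hw
    have hfinal := harc.const_add θ₀
    simp only [hηdef]
    refine hfinal.congr_deriv ?_
    simp only [hPdef]
    field_simp
    ring
  -- u and its derivatives
  have hu_cd := contDiff_u' abar ρ hρ hpos
  have hu_diff : Differentiable ℝ (fun θ => abar / ρ θ ^ 2) := hu_cd.differentiable (by norm_num)
  have hu2 : ContDiff ℝ (1+1) (fun θ => abar / ρ θ ^ 2) := by exact_mod_cast hu_cd
  have hu'_diff : Differentiable ℝ (deriv (fun θ => abar / ρ θ ^ 2)) :=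
    ((contDiff_succ_iff_deriv.mp hu2).2.2).differentiable (by norm_num)
  -- formula for deriv of k on the ball
  set g := fun t : ℝ => (2*(r+t*a)*a + 2*(t*b)*b) * ((fun θ => abar / ρ θ ^ 2) (η t))
      + b*r * (deriv (fun θ => abar / ρ θ ^ 2) (η t)) with hgdef
  have hopen : IsOpen {t : ℝ | |t| < ε} := isOpen_lt continuous_abs continuous_const
  have hgderiv : ∀ t : ℝ, |t| < ε → deriv (fun s => Φ (x + s • X)) t = g t := by
    intro t ht
    have hpt := hεball t ht
    have hPt := hPpos t hpt
    have hkev : (fun s => Φ (x + s • X)) =ᶠ[nhds t] (fun t => P t * (abar / ρ (η t)^2)) := by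
      filter_upwards [hopen.mem_nhds ht] with u hu using hkG u hu
    rw [hkev.deriv_eq]
    have h3 : HasDerivAt (fun t : ℝ => t*b) b t := by simpa using (hasDerivAt_id t).mul_const b
    have h2 : HasDerivAt (fun t : ℝ => r + t*a) a t := by
      simpa using ((hasDerivAt_id t).mul_const a).const_add r
    have hP : HasDerivAt P (2*(r+t*a)*a + 2*(t*b)*b) t := by
      simp only [hPdef]
      have : HasDerivAt (fun t => (r+t*a)^2 + (t*b)^2) _ t := (h2.pow 2).add (h3.pow 2)
      simpa [mul_comm, mul_assoc, mul_left_comm] using this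
    have huη : HasDerivAt (fun t => abar / ρ (η t)^2)
        (deriv (fun θ => abar / ρ θ ^ 2) (η t) * (b*r/P t)) t :=
      ((hu_diff (η t)).hasDerivAt).comp t (hηd t hpt)
    have hmul : HasDerivAt (fun t => P t * (abar / ρ (η t)^2)) _ t := hP.mul huη
    rw [hmul.deriv, hgdef]
    field_simp
  -- derivative of g at 0
  have hη0 : η 0 = θ₀ := by simp only [hηdef]; simp
  have hP0 : P 0 = r^2 := by simp only [hPdef]; simp
  have hη0d : HasDerivAt η (b*r / P 0) 0 := hηd 0 (by simpa using hr)
  have h30 : HasDerivAt (fun t : ℝ => t*b) b 0 := by simpa using (hasDerivAt_id (0:ℝ)).mul_const b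
  have h20 : HasDerivAt (fun t : ℝ => r + t*a) a 0 := by
    simpa using ((hasDerivAt_id (0:ℝ)).mul_const a).const_add r
  have hQ1 : HasDerivAt (fun t : ℝ => 2*(r+t*a)*a + 2*(t*b)*b) (2*a*a + 2*b*b) 0 := by
    exact ((h20.const_mul 2).mul_const a).add ((h30.const_mul 2).mul_const b)
  have huη0 : HasDerivAt (fun t => (fun θ => abar / ρ θ ^ 2) (η t))
      (deriv (fun θ => abar / ρ θ ^ 2) (η 0) * (b*r/P 0)) 0 :=
    ((hu_diff (η 0)).hasDerivAt).comp 0 hη0d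
  have hu'η0 : HasDerivAt (fun t => deriv (fun θ => abar / ρ θ ^ 2) (η t))
      (deriv (deriv (fun θ => abar / ρ θ ^ 2)) (η 0) * (b*r/P 0)) 0 :=
    ((hu'_diff (η 0)).hasDerivAt).comp 0 hη0d
  have hg0 : HasDerivAt g
      ((2*a*a + 2*b*b) * ((fun θ => abar / ρ θ ^ 2) (η 0))
        + (2*(r+0*a)*a + 2*(0*b)*b) * (deriv (fun θ => abar / ρ θ ^ 2) (η 0) * (b*r/P 0))
        + b*r * (deriv (deriv (fun θ => abar / ρ θ ^ 2)) (η 0) * (b*r/P 0))) 0 := by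
    simp only [hgdef]
    exact (hQ1.mul huη0).add (hu'η0.const_mul (b*r))
  -- put it together
  have hev2 : deriv (fun s => Φ (x + s • X)) =ᶠ[nhds (0:ℝ)] g := by
    filter_upwards [hopen.mem_nhds (by simpa using hεpos : |(0:ℝ)| < ε)] with t ht
    exact hgderiv t ht
  rw [hev2.deriv_eq, hg0.deriv]
  rw [hη0, hP0]
  unfold Afun Bfun Cfun
  have hrne := hr.ne'
  field_simp
  ring

theorem hessian_uniformly_positive_definite
    (abar : ℝ) (habar : 0 < abar)
    (ρ : ℝ → ℝ) (hρ : ContDiff ℝ 2 ρ)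
    (hper : Function.Periodic ρ (2 * π))
    (hpos : ∀ θ : ℝ, 0 < ρ θ)
    (hconv : ∀ θ : ℝ, 0 < ρ θ ^ 2 + 2 * deriv ρ θ ^ 2 - ρ θ * deriv (deriv ρ) θ)
    (Φ : EuclideanSpace ℝ (Fin 2) → ℝ)
    (hΦ : ∀ r : ℝ, 0 < r → ∀ θ : ℝ,
      Φ ((WithLp.equiv 2 (Fin 2 → ℝ)).symm ![r * cos θ, r * sin θ])
        = abar * r ^ 2 / ρ θ ^ 2) :
    ContDiffOn ℝ 2 Φ ({(0 : EuclideanSpace ℝ (Fin 2))}ᶜ) ∧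
    ∃ δ₁ : ℝ, 0 < δ₁ ∧
      ∀ x : EuclideanSpace ℝ (Fin 2), x ≠ 0 →
        ∀ X : EuclideanSpace ℝ (Fin 2),
          δ₁ * ‖X‖ ^ 2 ≤ fderiv ℝ (fderiv ℝ Φ) x X X := by
  constructor
  · intro x hx
    have hx' : x ≠ 0 := hx
    exact (Phi_contDiffAt abar ρ hρ hpos Φ hΦ x hx').contDiffWithinAt
  · obtain ⟨δ, hδ, hδle⟩ := lamf_min abar ρ habar hρ hpos hper hconv
    refine ⟨δ, hδ, fun x hx X => ?_⟩
    obtain ⟨θ₀, a, b, hab, hrep⟩ := hessian_rep abar ρ hρ hpos Φ hΦ x hx X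
    rw [hrep]
    have h1 := quad_lower (Afun abar ρ θ₀) (Bfun abar ρ θ₀) (Cfun abar ρ θ₀) a b
    have h2 : lamf abar ρ θ₀ * (a^2 + b^2)
        ≤ Afun abar ρ θ₀ * a^2 + 2 * Bfun abar ρ θ₀ * a * b + Cfun abar ρ θ₀ * b^2 := by
      unfold lamf; exact h1
    have h3 : δ * (a^2 + b^2) ≤ lamf abar ρ θ₀ * (a^2 + b^2) := by
      apply mul_le_mul_of_nonneg_right (hδle θ₀) (by positivity)
    calc δ * ‖X‖^2 = δ * (a^2 + b^2) := by rw [hab]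
      _ ≤ lamf abar ρ θ₀ * (a^2 + b^2) := h3
      _ ≤ _ := h2
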